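/- A symmetric n×n real matrix Q = (q_{ij}) is called diagonally dominant with nonnegative diagonals if q_{ii} ≥ Σ_{j≠i} |q_{ij}| for all i. If Q is diagonally dominant with nonnegative diagonals, then the function f(x) = xᵀQx on ℤⁿ is integrally convex. -/

import Mathlib

open scoped BigOperators

open Finset

/-- Auxiliary: the quadratic form of `Q`. -/
noncomputable def quadF {n : ℕ} (Q : Matrix (Fin n) (Fin n) ℝ) (v : Fin n → ℝ) : ℝ :=
  ∑ i, ∑ j, v i * Q i j * v j

/-- Auxiliary matrix of "slack" terms used in the diagonal dominance estimate. -/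
noncomputable def Gm {n : ℕ} (Q : Matrix (Fin n) (Fin n) ℝ) (a b : Fin n → ℝ) (i j : Fin n) : ℝ :=
  if i = j then 0 else |Q i j| * (a i^2 - b i^2 - (|a i| * |a j| - |b i| * |b j|))

lemma abs_sub_of_sign (x y : ℝ) (h : 0 ≤ x*y) : |x - y| = abs (|x| - |y|) := by
  have habs : |x| * |y| = x*y := by rw [← abs_mul, abs_of_nonneg h]
  have hsq : (x-y)^2 = (|x| - |y|)^2 := by
    have h1 := sq_abs x
    have h2 := sq_abs y
    nlinarith [h1, h2, habs]
  calc |x - y| = Real.sqrt ((x-y)^2) := (Real.sqrt_sq_eq_abs _).symm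
    _ = Real.sqrt ((|x| - |y|)^2) := by rw [hsq]
    _ = abs (|x| - |y|) := Real.sqrt_sq_eq_abs _

lemma pair_bound (p q r s : ℝ) (h1 : 0 ≤ p*r) (h2 : 0 ≤ q*s) (h3 : |r| ≤ |p|) (h4 : |s| ≤ |q|) :
    |p*q - r*s| ≤ |p| * |q| - |r| * |s| := by
  have hsign : 0 ≤ (p*q) * (r*s) := by nlinarith
  rw [abs_sub_of_sign _ _ hsign, abs_mul, abs_mul]
  rw [abs_of_nonneg (by nlinarith [abs_nonneg r, abs_nonneg s] : (0:ℝ) ≤ |p| * |q| - |r| * |s|)]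

lemma quadF_mono {n : ℕ} (Q : Matrix (Fin n) (Fin n) ℝ) (hsymm : Q.IsSymm)
    (hdd : ∀ i, (∑ j ∈ Finset.univ.erase i, |Q i j|) ≤ Q i i)
    (a b : Fin n → ℝ) (hsign : ∀ i, 0 ≤ a i * b i) (hle : ∀ i, |b i| ≤ |a i|)
    (hdiff : ∀ i j, abs (|b i| - |b j|) ≤ abs (|a i| - |a j|)) :
    quadF Q b ≤ quadF Q a := by
  have hpt : ∀ i j, 0 ≤ Gm Q a b i j + Gm Q a b j i := by
    intro i j
    by_cases hij : i = j
    · subst hij; simp [Gm]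
    · have hQ : Q j i = Q i j := hsymm.apply i j
      simp only [Gm, if_neg hij, if_neg (Ne.symm hij), hQ]
      have hsq : (|b i| - |b j|)^2 ≤ (|a i| - |a j|)^2 := by
        have h := pow_le_pow_left₀ (abs_nonneg (|b i| - |b j|)) (hdiff i j) 2
        rwa [sq_abs, sq_abs] at h
      have hexp : a i^2 - b i^2 - (|a i| * |a j| - |b i| * |b j|)
          + (a j^2 - b j^2 - (|a j| * |a i| - |b j| * |b i|))
          = (|a i| - |a j|)^2 - (|b i| - |b j|)^2 := by
        linear_combination (-(sq_abs (a i)) - sq_abs (a j) + sq_abs (b i) + sq_abs (b j))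
      calc (0:ℝ) ≤ |Q i j| * ((|a i| - |a j|)^2 - (|b i| - |b j|)^2) :=
            mul_nonneg (abs_nonneg _) (by linarith)
        _ = _ := by rw [← hexp]; ring
  have hA : 0 ≤ ∑ i, ∑ j, Gm Q a b i j := by
    have hswap : (∑ i, ∑ j, Gm Q a b i j) = ∑ i, ∑ j, Gm Q a b j i := Finset.sum_comm
    have h2 : 0 ≤ (∑ i, ∑ j, Gm Q a b i j) + (∑ i, ∑ j, Gm Q a b j i) := by
      rw [← Finset.sum_add_distrib]
      refine Finset.sum_nonneg fun i _ => ?_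
      rw [← Finset.sum_add_distrib]
      exact Finset.sum_nonneg fun j _ => hpt i j
    linarith [hswap ▸ h2]
  have hB : (∑ i, ∑ j, Gm Q a b i j)
      ≤ ∑ i, ∑ j, (a i * Q i j * a j - b i * Q i j * b j) := by
    refine Finset.sum_le_sum fun i _ => ?_
    have hab : 0 ≤ a i^2 - b i^2 := by
      have := pow_le_pow_left₀ (abs_nonneg (b i)) (hle i) 2
      rw [sq_abs, sq_abs] at this; linarith
    have hTii : (∑ j ∈ univ.erase i, |Q i j| * (a i^2 - b i^2))
        ≤ a i * Q i i * a i - b i * Q i i * b i := by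
      calc (∑ j ∈ univ.erase i, |Q i j| * (a i^2 - b i^2))
          = (∑ j ∈ univ.erase i, |Q i j|) * (a i^2 - b i^2) := (Finset.sum_mul _ _ _).symm
        _ ≤ Q i i * (a i^2 - b i^2) := mul_le_mul_of_nonneg_right (hdd i) hab
        _ = a i * Q i i * a i - b i * Q i i * b i := by ring
    have hTij : ∀ j, -(|Q i j| * (|a i| * |a j| - |b i| * |b j|))
        ≤ a i * Q i j * a j - b i * Q i j * b j := by
      intro j
      have habs := pair_bound (a i) (a j) (b i) (b j) (hsign i) (hsign j) (hle i) (hle j)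
      have n1 := neg_abs_le (Q i j * (a i * a j - b i * b j))
      rw [abs_mul] at n1
      nlinarith [abs_nonneg (Q i j)]
    calc (∑ j, Gm Q a b i j)
        = Gm Q a b i i + ∑ j ∈ univ.erase i, Gm Q a b i j :=
          (Finset.add_sum_erase _ _ (Finset.mem_univ i)).symm
      _ = ∑ j ∈ univ.erase i, (|Q i j| * (a i^2 - b i^2)
            + -(|Q i j| * (|a i| * |a j| - |b i| * |b j|))) := by
          rw [show Gm Q a b i i = 0 from if_pos rfl, zero_add]
          refine Finset.sum_congr rfl fun j hj => ?_
          rw [show Gm Q a b i j = |Q i j| * (a i^2 - b i^2 - (|a i| * |a j| - |b i| * |b j|))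
            from if_neg (Ne.symm (Finset.ne_of_mem_erase hj))]
          ring
      _ = (∑ j ∈ univ.erase i, |Q i j| * (a i^2 - b i^2))
            + ∑ j ∈ univ.erase i, -(|Q i j| * (|a i| * |a j| - |b i| * |b j|)) :=
          Finset.sum_add_distrib
      _ ≤ (a i * Q i i * a i - b i * Q i i * b i)
            + ∑ j ∈ univ.erase i, (a i * Q i j * a j - b i * Q i j * b j) :=
          add_le_add hTii (Finset.sum_le_sum fun j _ => hTij j)
      _ = ∑ j, (a i * Q i j * a j - b i * Q i j * b j) :=
          Finset.add_sum_erase univ (fun j => a i * Q i j * a j - b i * Q i j * b j)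
            (Finset.mem_univ i)
  have heq : (∑ i, ∑ j, (a i * Q i j * a j - b i * Q i j * b j)) = quadF Q a - quadF Q b := by
    unfold quadF
    rw [← Finset.sum_sub_distrib]
    exact Finset.sum_congr rfl fun i _ => Finset.sum_sub_distrib _ _
  rw [heq] at hB
  linarith

lemma quadF_add_sub {n : ℕ} (Q : Matrix (Fin n) (Fin n) ℝ) (u c : Fin n → ℝ) :
    quadF Q (u + c) + quadF Q (u - c) = 2 * quadF Q u + 2 * quadF Q c := by
  unfold quadF
  rw [Finset.mul_sum, Finset.mul_sum, ← Finset.sum_add_distrib, ← Finset.sum_add_distrib]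
  refine Finset.sum_congr rfl fun i _ => ?_
  rw [Finset.mul_sum, Finset.mul_sum, ← Finset.sum_add_distrib, ← Finset.sum_add_distrib]
  refine Finset.sum_congr rfl fun j _ => ?_
  simp only [Pi.add_apply, Pi.sub_apply]
  ring

/-- The integral neighborhood N(u) = {z ∈ ℤⁿ : |uᵢ − zᵢ| < 1 for all i}. -/
def intNbhd {n : ℕ} (u : Fin n → ℝ) : Set (Fin n → ℤ) :=
  {z | ∀ i, |u i - (z i : ℝ)| < 1}

/-- The local convex extension f̃(u): the infimum of convex combinations
Σ λ_z f(z) over points z of the integral neighborhood N(u) whose convex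
combination with the weights λ equals u.  (It is +∞ when no such
combination exists.) -/
noncomputable def localConvexExt {n : ℕ} (f : (Fin n → ℤ) → EReal)
    (u : Fin n → ℝ) : EReal :=
  sInf { v : EReal | ∃ (t : Finset (Fin n → ℤ)) (lam : (Fin n → ℤ) → ℝ),
    (∀ z ∈ t, z ∈ intNbhd u) ∧ (∀ z ∈ t, 0 ≤ lam z) ∧
    (∑ z ∈ t, lam z) = 1 ∧
    (∀ i, (∑ z ∈ t, lam z * (z i : ℝ)) = u i) ∧
    v = ∑ z ∈ t, (((lam z : ℝ) : EReal) * f z) }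

/-- A function f : ℤⁿ → ℝ ∪ {+∞} with nonempty effective domain is
*integrally convex* if its local convex extension satisfies the midpoint
inequality f̃((x+y)/2) ≤ (f(x)+f(y))/2 for all x, y ∈ ℤⁿ with
‖x − y‖∞ ≥ 2 (this is equivalent to convexity of f̃ on ℝⁿ). -/
def IntegrallyConvexFn {n : ℕ} (f : (Fin n → ℤ) → EReal) : Prop :=
  (∃ x, f x ≠ ⊤) ∧
  ∀ x y : Fin n → ℤ, (∃ i, 2 ≤ |x i - y i|) →
    localConvexExt f (fun i => ((x i + y i : ℤ) : ℝ) / 2) ≤ (f x + f y) / 2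

/-- **Diagonally dominant quadratics are integrally convex.**
If a symmetric real matrix Q satisfies qᵢᵢ ≥ Σ_{j≠i} |qᵢⱼ| for all i,
then f(x) = xᵀQx is integrally convex on ℤⁿ. -/
theorem diagonally_dominant_quadratic_integrally_convex (n : ℕ)
    (Q : Matrix (Fin n) (Fin n) ℝ) (hsymm : Q.IsSymm)
    (hdd : ∀ i, (∑ j ∈ Finset.univ.erase i, |Q i j|) ≤ Q i i) :
    IntegrallyConvexFn (fun x : Fin n → ℤ =>
      (((∑ i, ∑ j, (x i : ℝ) * Q i j * (x j : ℝ)) : ℝ) : EReal)) := by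
  classical
  constructor
  · exact ⟨0, EReal.coe_ne_top _⟩
  intro x y _
  set s : Fin n → ℤ := fun i => if 2 ∣ (x i + y i) then 0 else Int.sign (x i - y i) with hs
  have hsignval : ∀ i, (s i = 0 ∧ 2 ∣ (x i - y i)) ∨
      (s i = 1 ∧ 0 < x i - y i ∧ ¬ 2 ∣ (x i - y i)) ∨
      (s i = -1 ∧ x i - y i < 0 ∧ ¬ 2 ∣ (x i - y i)) := by
    intro i
    by_cases h : 2 ∣ (x i + y i)
    · left; exact ⟨by simp [hs, h], by omega⟩
    · have hpar : ¬ 2 ∣ (x i - y i) := by omega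
      have hne : x i - y i ≠ 0 := by omega
      rcases lt_trichotomy (x i - y i) 0 with hlt|heq|hgt
      · right; right
        exact ⟨by simp only [hs, if_neg h]; exact Int.sign_eq_neg_one_of_neg hlt, hlt, hpar⟩
      · exact absurd heq hne
      · right; left
        exact ⟨by simp only [hs, if_neg h]; exact Int.sign_eq_one_of_pos hgt, hgt, hpar⟩
  have hdvd1 : ∀ i, 2 ∣ (x i + y i + s i) := by
    intro i; rcases hsignval i with ⟨h1,h2⟩|⟨h1,h2,h3⟩|⟨h1,h2,h3⟩ <;> rw [h1] <;> omega
  have hdvd2 : ∀ i, 2 ∣ (x i + y i - s i) := by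
    intro i; rcases hsignval i with ⟨h1,h2⟩|⟨h1,h2,h3⟩|⟨h1,h2,h3⟩ <;> rw [h1] <;> omega
  set z : Fin n → ℤ := fun i => (x i + y i + s i) / 2 with hzd
  set w : Fin n → ℤ := fun i => (x i + y i - s i) / 2 with hwd
  have hz2 : ∀ i, 2 * z i = x i + y i + s i := fun i => Int.mul_ediv_cancel' (hdvd1 i)
  have hw2 : ∀ i, 2 * w i = x i + y i - s i := fun i => Int.mul_ediv_cancel' (hdvd2 i)
  set u : Fin n → ℝ := fun i => ((x i + y i : ℤ) : ℝ) / 2 with hu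
  set a : Fin n → ℝ := fun i => ((x i - y i : ℤ) : ℝ) / 2 with ha
  set b : Fin n → ℝ := fun i => ((s i : ℤ) : ℝ) / 2 with hb
  have hzr : ∀ i, (z i : ℝ) = u i + b i := by
    intro i
    have h2 : ((2 * z i : ℤ) : ℝ) = ((x i + y i + s i : ℤ) : ℝ) := by rw [hz2 i]
    push_cast at h2 ⊢
    simp only [hu, hb]
    push_cast
    linarith
  have hwr : ∀ i, (w i : ℝ) = u i - b i := by
    intro i
    have h2 : ((2 * w i : ℤ) : ℝ) = ((x i + y i - s i : ℤ) : ℝ) := by rw [hw2 i]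
    push_cast at h2 ⊢
    simp only [hu, hb]
    push_cast
    linarith
  have hxr : ∀ i, (x i : ℝ) = u i + a i := by
    intro i; simp only [hu, ha]; push_cast; ring
  have hyr : ∀ i, (y i : ℝ) = u i - a i := by
    intro i; simp only [hu, ha]; push_cast; ring
  have habs_a : ∀ i, |a i| = ((|x i - y i| : ℤ) : ℝ) / 2 := by
    intro i; simp only [ha]; rw [abs_div, Int.cast_abs]; norm_num
  have habs_b : ∀ i, |b i| = ((|s i| : ℤ) : ℝ) / 2 := by
    intro i; simp only [hb]; rw [abs_div, Int.cast_abs]; norm_num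
  have hpar : ∀ i, (|s i| = 0 ∧ 2 ∣ |x i - y i|) ∨ (|s i| = 1 ∧ ¬ 2 ∣ |x i - y i|) := by
    intro i
    rcases hsignval i with ⟨h1,h2⟩|⟨h1,h2,h3⟩|⟨h1,h2,h3⟩
    · left; exact ⟨by rw [h1]; simp, (dvd_abs 2 _).mpr h2⟩
    · right; exact ⟨by rw [h1]; simp, fun hc => h3 ((dvd_abs 2 _).mp hc)⟩
    · right; exact ⟨by rw [h1]; simp, fun hc => h3 ((dvd_abs 2 _).mp hc)⟩
  have hsign' : ∀ i, 0 ≤ a i * b i := by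
    intro i
    have hZ : 0 ≤ (x i - y i) * s i := by
      rcases hsignval i with ⟨h1,h2⟩|⟨h1,h2,h3⟩|⟨h1,h2,h3⟩ <;> rw [h1] <;> nlinarith
    have hR : (0:ℝ) ≤ (((x i - y i) * s i : ℤ) : ℝ) := by exact_mod_cast hZ
    simp only [ha, hb]
    push_cast at hR ⊢
    nlinarith
  have hZle : ∀ i, |s i| ≤ |x i - y i| := by
    intro i
    rcases hpar i with ⟨h1,h2⟩|⟨h1,h2⟩
    · rw [h1]; exact abs_nonneg _
    · rw [h1]
      refine Int.one_le_abs ?_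
      intro h0
      apply h2
      rw [h0]
      simp
  have hle' : ∀ i, |b i| ≤ |a i| := by
    intro i
    rw [habs_a, habs_b]
    have hc : ((|s i| : ℤ) : ℝ) ≤ ((|x i - y i| : ℤ) : ℝ) := by exact_mod_cast hZle i
    linarith
  have hdiff' : ∀ i j, abs (|b i| - |b j|) ≤ abs (|a i| - |a j|) := by
    intro i j
    have hZ : |(|s i| - |s j|)| ≤ |(|x i - y i| - |x j - y j|)| := by
      rcases hpar i with ⟨h1,h2⟩|⟨h1,h2⟩ <;> rcases hpar j with ⟨g1,g2⟩|⟨g1,g2⟩ <;>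
          rw [h1, g1] <;> simp only [sub_zero, sub_self, abs_zero, zero_sub, abs_neg, abs_one]
      · exact abs_nonneg _
      · refine Int.one_le_abs (sub_ne_zero.mpr ?_)
        intro he; exact g2 (he ▸ h2)
      · refine Int.one_le_abs (sub_ne_zero.mpr ?_)
        intro he; exact h2 (he ▸ g2)
      · exact abs_nonneg _
    have e1 : |b i| - |b j| = (((|s i| - |s j| : ℤ)) : ℝ) / 2 := by
      rw [habs_b, habs_b]; push_cast; ring
    have e2 : |a i| - |a j| = (((|x i - y i| - |x j - y j| : ℤ)) : ℝ) / 2 := by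
      rw [habs_a, habs_a]; push_cast; ring
    rw [e1, e2, abs_div, abs_div, ← Int.cast_abs, ← Int.cast_abs]
    have hc : ((|(|s i| - |s j|)| : ℤ) : ℝ) ≤ ((|(|x i - y i| - |x j - y j|)| : ℤ) : ℝ) := by
      exact_mod_cast hZ
    have h2 : |(2:ℝ)| = 2 := by norm_num
    rw [h2]
    linarith
  -- the key quadratic inequality
  have hkey : quadF Q (fun i => (z i:ℝ)) + quadF Q (fun i => (w i:ℝ))
      ≤ quadF Q (fun i => (x i:ℝ)) + quadF Q (fun i => (y i:ℝ)) := by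
    have hz : (fun i => (z i:ℝ)) = u + b := funext fun i => hzr i
    have hw : (fun i => (w i:ℝ)) = u - b := funext fun i => hwr i
    have hx : (fun i => (x i:ℝ)) = u + a := funext fun i => hxr i
    have hy : (fun i => (y i:ℝ)) = u - a := funext fun i => hyr i
    rw [hz, hw, hx, hy, quadF_add_sub, quadF_add_sub]
    have := quadF_mono Q hsymm hdd a b hsign' hle' hdiff'
    linarith
  have hbdd : ∀ i, |b i| ≤ 1/2 := by
    intro i
    rw [habs_b]
    have h1 : |s i| ≤ 1 := by rcases hpar i with ⟨h1,_⟩|⟨h1,_⟩ <;> omega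
    have : ((|s i| : ℤ) : ℝ) ≤ 1 := by exact_mod_cast h1
    linarith
  have hnbz : z ∈ intNbhd u := by
    intro i
    rw [hzr i, show u i - (u i + b i) = -(b i) by ring, abs_neg]
    have := hbdd i; linarith
  have hnbw : w ∈ intNbhd u := by
    intro i
    rw [hwr i, show u i - (u i - b i) = b i by ring]
    have := hbdd i; linarith
  have hhalf : ∀ A B : ℝ, ((A:EReal) + (B:EReal))/2 = (((A+B)/2 : ℝ) : EReal) := fun A B => by
    rw [← EReal.coe_add, show ((2:EReal)) = ((2:ℝ):EReal) by norm_cast, EReal.coe_div]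
  rcases eq_or_ne z w with hzw | hzw
  · -- singleton case: s = 0 and z = w
    have hs0 : ∀ i, s i = 0 := by
      intro i
      have h1 := hz2 i
      have h2 := hw2 i
      have h3 : z i = w i := congrFun hzw i
      omega
    have hzu : ∀ i, (z i : ℝ) = u i := by
      intro i
      rw [hzr i]
      simp [hb, hs0 i]
    have hmem : (((quadF Q (fun i => (z i:ℝ)) : ℝ) : EReal)) ∈
        { v : EReal | ∃ (t : Finset (Fin n → ℤ)) (lam : (Fin n → ℤ) → ℝ),
          (∀ z ∈ t, z ∈ intNbhd u) ∧ (∀ z ∈ t, 0 ≤ lam z) ∧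
          (∑ z ∈ t, lam z) = 1 ∧
          (∀ i, (∑ z ∈ t, lam z * (z i : ℝ)) = u i) ∧
          v = ∑ z ∈ t, (((lam z : ℝ) : EReal) *
            ((((∑ i, ∑ j, (z i : ℝ) * Q i j * (z j : ℝ)) : ℝ) : EReal))) } := by
      refine ⟨{z}, fun _ => 1, ?_, ?_, ?_, ?_, ?_⟩
      · intro v hv; rw [Finset.mem_singleton] at hv; subst hv; exact hnbz
      · intro v _; norm_num
      · simp
      · intro i; rw [Finset.sum_singleton, one_mul, hzu i]
      · rw [Finset.sum_singleton]
        norm_num [quadF]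
    refine le_trans (sInf_le hmem) ?_
    rw [hhalf]
    rw [EReal.coe_le_coe_iff]
    have hzweq : quadF Q (fun i => (z i:ℝ)) = quadF Q (fun i => (w i:ℝ)) := by rw [hzw]
    show quadF Q (fun i => (z i:ℝ)) ≤
      (quadF Q (fun i => (x i:ℝ)) + quadF Q (fun i => (y i:ℝ)))/2
    linarith
  · -- two-point case
    have hmem : ((((quadF Q (fun i => (z i:ℝ)))/2 + (quadF Q (fun i => (w i:ℝ)))/2 : ℝ) : EReal)) ∈
        { v : EReal | ∃ (t : Finset (Fin n → ℤ)) (lam : (Fin n → ℤ) → ℝ),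
          (∀ z ∈ t, z ∈ intNbhd u) ∧ (∀ z ∈ t, 0 ≤ lam z) ∧
          (∑ z ∈ t, lam z) = 1 ∧
          (∀ i, (∑ z ∈ t, lam z * (z i : ℝ)) = u i) ∧
          v = ∑ z ∈ t, (((lam z : ℝ) : EReal) *
            ((((∑ i, ∑ j, (z i : ℝ) * Q i j * (z j : ℝ)) : ℝ) : EReal))) } := by
      refine ⟨{z, w}, fun _ => 1/2, ?_, ?_, ?_, ?_, ?_⟩
      · intro v hv
        rcases Finset.mem_insert.mp hv with h|h
        · subst h; exact hnbz
        · rw [Finset.mem_singleton] at h; subst h; exact hnbw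
      · intro v _; norm_num
      · rw [Finset.sum_pair hzw]; norm_num
      · intro i
        rw [Finset.sum_pair hzw, hzr i, hwr i]
        ring
      · rw [Finset.sum_pair hzw, ← EReal.coe_mul, ← EReal.coe_mul, ← EReal.coe_add]
        rw [EReal.coe_eq_coe_iff]
        unfold quadF
        ring
    refine le_trans (sInf_le hmem) ?_
    rw [hhalf]
    rw [EReal.coe_le_coe_iff]
    have hx' : quadF Q (fun i => (x i:ℝ)) = ∑ i, ∑ j, (x i:ℝ) * Q i j * (x j:ℝ) := rfl
    have hy' : quadF Q (fun i => (y i:ℝ)) = ∑ i, ∑ j, (y i:ℝ) * Q i j * (y j:ℝ) := rfl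
    rw [hx', hy'] at hkey
    linarith
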